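/- Every Lyapunov-stable stationary point of the multipopulation replicator dynamics is a Nash equilibrium: if Q* ∈ K satisfies G(Q*) = 0 and Q* is Lyapunov stable for the ODE dQ/dt = G(Q), then Q* is a Nash equilibrium. Equivalently, a stationary point that is not a Nash equilibrium is not Lyapunov stable. -/

import Mathlib

open Finset

/-- A point of the standard simplex in `ℝ^M`. -/
def IsSimplex {M : ℕ} (q : Fin M → ℝ) : Prop :=
  (∀ ℓ, 0 ≤ q ℓ) ∧ ∑ ℓ, q ℓ = 1

/-- A mixed profile: one mixed strategy per player. -/
def InK {n : ℕ} {m : Fin n → ℕ} (Q : ∀ i, Fin (m i) → ℝ) : Prop :=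
  ∀ i, IsSimplex (Q i)

/-- The `ℓ`-th unit vector `e_ℓ`. -/
def unitVec {M : ℕ} (ℓ : Fin M) : Fin M → ℝ := fun k => if k = ℓ then 1 else 0

/-- The multilinear (mixed) extension of a function on pure profiles:
`ū(Q) = Σ_s (Π_j q_{j, s_j}) c(s)`. -/
noncomputable def mixedExt {n : ℕ} {m : Fin n → ℕ} (c : (∀ j, Fin (m j)) → ℝ)
    (Q : ∀ i, Fin (m i) → ℝ) : ℝ :=
  ∑ s : ∀ j, Fin (m j), (∏ j, Q j (s j)) * c s

/-- Nash equilibrium: no player can decrease her expected cost by a unilateral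
(mixed) deviation. -/
def IsNash {n : ℕ} {m : Fin n → ℕ} (c : ∀ _i : Fin n, (∀ j, Fin (m j)) → ℝ)
    (Q : ∀ i, Fin (m i) → ℝ) : Prop :=
  ∀ i, ∀ q' : Fin (m i) → ℝ, IsSimplex q' →
    mixedExt (c i) Q ≤ mixedExt (c i) (Function.update Q i q')

/-- The multipopulation replicator vector field:
`G_{i,ℓ}(Q) = -p_i q_{i,ℓ} (ū_i(e_ℓ, Q_{-i}) - ū_i(q_i, Q_{-i}))`. -/
noncomputable def repl {n : ℕ} {m : Fin n → ℕ} (c : ∀ _i : Fin n, (∀ j, Fin (m j)) → ℝ)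
    (p : Fin n → ℝ) (Q : ∀ i, Fin (m i) → ℝ) (i : Fin n) (ℓ : Fin (m i)) : ℝ :=
  -(p i) * Q i ℓ *
    (mixedExt (c i) (Function.update Q i (unitVec ℓ)) - mixedExt (c i) Q)

lemma prod_update {n : ℕ} {m : Fin n → ℕ} (Q : ∀ i, Fin (m i) → ℝ) (i : Fin n)
    (v : Fin (m i) → ℝ) (s : ∀ j, Fin (m j)) :
    (∏ j, Function.update Q i v j (s j)) = v (s i) * ∏ j ∈ univ.erase i, Q j (s j) := by
  rw [← Finset.prod_erase_mul _ _ (mem_univ i)]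
  rw [mul_comm]
  congr 1
  · simp
  · exact Finset.prod_congr rfl fun j hj => by
      rw [Function.update_of_ne (Finset.ne_of_mem_erase hj)]

lemma mixedExt_update {n : ℕ} {m : Fin n → ℕ} (c : (∀ j, Fin (m j)) → ℝ)
    (Q : ∀ i, Fin (m i) → ℝ) (i : Fin n) (q' : Fin (m i) → ℝ) :
    mixedExt c (Function.update Q i q')
      = ∑ ℓ, q' ℓ * mixedExt c (Function.update Q i (unitVec ℓ)) := by
  unfold mixedExt
  simp only [prod_update, unitVec]
  rw [eq_comm]
  simp only [Finset.mul_sum]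
  rw [Finset.sum_comm]
  refine Finset.sum_congr rfl fun s _ => ?_
  rw [Finset.sum_eq_single (s i)]
  · simp; ring
  · intro b _ hb
    simp [Ne.symm hb]
  · simp

lemma mixedExt_self {n : ℕ} {m : Fin n → ℕ} (c : (∀ j, Fin (m j)) → ℝ)
    (Q : ∀ i, Fin (m i) → ℝ) (i : Fin n) :
    mixedExt c Q = ∑ ℓ, Q i ℓ * mixedExt c (Function.update Q i (unitVec ℓ)) := by
  conv_lhs => rw [← Function.update_eq_self i Q]
  exact mixedExt_update c Q i (Q i)

lemma contDiff_coord {n : ℕ} {m : Fin n → ℕ} (j : Fin n) (k : Fin (m j)) :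
    ContDiff ℝ 1 (fun Q : ∀ i, Fin (m i) → ℝ => Q j k) :=
  ((ContinuousLinearMap.proj k).comp
    (ContinuousLinearMap.proj (R := ℝ) (φ := fun i => Fin (m i) → ℝ) j)).contDiff

lemma contDiff_mixedExt {n : ℕ} {m : Fin n → ℕ} (c : (∀ j, Fin (m j)) → ℝ) :
    ContDiff ℝ 1 (fun Q : ∀ i, Fin (m i) → ℝ => mixedExt c Q) := by
  unfold mixedExt
  refine ContDiff.sum fun s _ => ?_
  exact (contDiff_prod fun j _ => contDiff_coord j (s j)).mul contDiff_const

lemma contDiff_updateConst {n : ℕ} {m : Fin n → ℕ} (i : Fin n) (v : Fin (m i) → ℝ) :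
    ContDiff ℝ 1 (fun Q : ∀ i', Fin (m i') → ℝ => Function.update Q i v) := by
  rw [contDiff_pi]
  intro j
  rcases eq_or_ne j i with h | h
  · subst h
    simp only [Function.update_self]
    exact contDiff_const
  · simp only [Function.update_of_ne h]
    exact (ContinuousLinearMap.proj (R := ℝ) (φ := fun i' => Fin (m i') → ℝ) j).contDiff

open Set intervalIntegral in
lemma ode_exp_formula {a b : ℝ} (hab : a ≤ b) {g q : ℝ → ℝ}
    (hg : ContinuousOn g (Set.Icc a b))
    (hq : ∀ t ∈ Set.Icc a b, HasDerivWithinAt q (q t * g t) (Set.Icc a b) t) :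
    ∀ t ∈ Set.Icc a b, q t
      = q a * Real.exp (∫ s in a..t, Set.IccExtend hab (fun u : Set.Icc a b => g u) s) := by
  set G : ℝ → ℝ := Set.IccExtend hab (fun u : Set.Icc a b => g u) with hGdef
  have hGcont : Continuous G :=
    continuous_IccExtend_iff.mpr (continuousOn_iff_continuous_restrict.mp hg)
  have hGeq : ∀ t ∈ Set.Icc a b, G t = g t := fun t ht => by
    rw [hGdef, Set.IccExtend_of_mem hab _ ht]
  set A : ℝ → ℝ := fun t => ∫ s in a..t, G s with hAdef
  have hA : ∀ t, HasDerivAt A (G t) t := fun t =>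
    integral_hasDerivAt_right (hGcont.intervalIntegrable _ _)
      (hGcont.stronglyMeasurableAtFilter _ _) hGcont.continuousAt
  have hh : ∀ t ∈ Set.Icc a b, HasDerivWithinAt (fun u => q u * Real.exp (-A u)) 0
      (Set.Icc a b) t := by
    intro t ht
    have h1 : HasDerivAt (fun u => Real.exp (-A u)) (Real.exp (-A t) * -G t) t :=
      ((hA t).neg).exp
    have h2 := (hq t ht).mul h1.hasDerivWithinAt
    refine h2.congr_deriv ?_
    rw [hGeq t ht]
    ring
  have hAcont : Continuous A := by
    have : Differentiable ℝ A := fun t => (hA t).differentiableAt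
    exact this.continuous
  have hcont : ContinuousOn (fun u => q u * Real.exp (-A u)) (Set.Icc a b) := by
    refine ContinuousOn.mul (fun t ht => (hq t ht).continuousWithinAt) ?_
    exact (Real.continuous_exp.comp hAcont.neg).continuousOn
  have hconst := constant_of_has_deriv_right_zero hcont (fun x hx =>
    (hh x (Set.Ico_subset_Icc_self hx)).mono_of_mem_nhdsWithin (Icc_mem_nhdsGE_of_mem hx))
  intro t ht
  have h0 := hconst t ht
  have hAa : A a = 0 := integral_same
  rw [hAa, neg_zero, Real.exp_zero, mul_one] at h0
  have : q t = q t * Real.exp (-A t) * Real.exp (A t) := by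
    rw [mul_assoc, ← Real.exp_add, neg_add_cancel, Real.exp_zero, mul_one]
  rw [this, h0]

lemma ode_zero {a b : ℝ} (hab : a ≤ b) {g q : ℝ → ℝ}
    (hg : ContinuousOn g (Set.Icc a b))
    (hq : ∀ t ∈ Set.Icc a b, HasDerivWithinAt q (q t * g t) (Set.Icc a b) t)
    (h0 : q a = 0) : ∀ t ∈ Set.Icc a b, q t = 0 := fun t ht => by
  rw [ode_exp_formula hab hg hq t ht, h0, zero_mul]

lemma ode_nonneg {a b : ℝ} (hab : a ≤ b) {g q : ℝ → ℝ}
    (hg : ContinuousOn g (Set.Icc a b))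
    (hq : ∀ t ∈ Set.Icc a b, HasDerivWithinAt q (q t * g t) (Set.Icc a b) t)
    (h0 : 0 ≤ q a) : ∀ t ∈ Set.Icc a b, 0 ≤ q t := fun t ht => by
  rw [ode_exp_formula hab hg hq t ht]
  positivity

open intervalIntegral in
lemma ode_lower_bound {a b lam : ℝ} (hab : a ≤ b) {g q : ℝ → ℝ}
    (hg : ContinuousOn g (Set.Icc a b))
    (hq : ∀ t ∈ Set.Icc a b, HasDerivWithinAt q (q t * g t) (Set.Icc a b) t)
    (h0 : 0 ≤ q a) (hlb : ∀ t ∈ Set.Icc a b, lam ≤ g t) :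
    ∀ t ∈ Set.Icc a b, q a * Real.exp (lam * (t - a)) ≤ q t := by
  intro t ht
  rw [ode_exp_formula hab hg hq t ht]
  set G : ℝ → ℝ := Set.IccExtend hab (fun u : Set.Icc a b => g u) with hGdef
  have hGcont : Continuous G :=
    continuous_IccExtend_iff.mpr (continuousOn_iff_continuous_restrict.mp hg)
  have hint : (∫ s in a..t, lam) ≤ ∫ s in a..t, G s := by
    refine integral_mono_on ht.1 (intervalIntegrable_const) (hGcont.intervalIntegrable _ _) ?_
    intro s hs
    have hs' : s ∈ Set.Icc a b := ⟨hs.1, hs.2.trans ht.2⟩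
    rw [hGdef, Set.IccExtend_of_mem hab _ hs']
    exact hlb s hs'
  rw [integral_const, smul_eq_mul, mul_comm] at hint
  exact mul_le_mul_of_nonneg_left (Real.exp_le_exp.mpr hint) h0

section Invariance

variable {n : ℕ} {m : Fin n → ℕ} (c : ∀ _i : Fin n, (∀ j, Fin (m j)) → ℝ) (p : Fin n → ℝ)

/-- component extraction of a vector-valued derivative -/
lemma hasDerivWithinAt_comp_coord {f : ℝ → ∀ i, Fin (m i) → ℝ} {d : ∀ i, Fin (m i) → ℝ}
    {s : Set ℝ} {t : ℝ} (hf : HasDerivWithinAt f d s t) (i : Fin n) (ℓ : Fin (m i)) :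
    HasDerivWithinAt (fun u => f u i ℓ) (d i ℓ) s t := by
  have := ((ContinuousLinearMap.proj ℓ).comp
    (ContinuousLinearMap.proj (R := ℝ) (φ := fun i' => Fin (m i') → ℝ) i)).hasFDerivAt
      (x := f t)
  exact this.comp_hasDerivWithinAt t hf

lemma continuousOn_comp_mixedExt {f : ℝ → ∀ i, Fin (m i) → ℝ} {s : Set ℝ}
    (hf : ContinuousOn f s) (c' : (∀ j, Fin (m j)) → ℝ) :
    ContinuousOn (fun t => mixedExt c' (f t)) s :=
  (contDiff_mixedExt c').continuous.comp_continuousOn hf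

lemma continuousOn_comp_mixedExt_update {f : ℝ → ∀ i, Fin (m i) → ℝ} {s : Set ℝ}
    (hf : ContinuousOn f s) (c' : (∀ j, Fin (m j)) → ℝ) (i : Fin n) (v : Fin (m i) → ℝ) :
    ContinuousOn (fun t => mixedExt c' (Function.update (f t) i v)) s :=
  ((contDiff_mixedExt c').comp (contDiff_updateConst i v)).continuous.comp_continuousOn hf

lemma sum_repl (Q : ∀ i, Fin (m i) → ℝ) (i : Fin n) :
    ∑ ℓ, repl c p Q i ℓ
      = -((1 - ∑ ℓ, Q i ℓ) * (p i * mixedExt (c i) Q)) := by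
  unfold repl
  have : ∀ ℓ : Fin (m i), -(p i) * Q i ℓ *
      (mixedExt (c i) (Function.update Q i (unitVec ℓ)) - mixedExt (c i) Q)
      = -(p i) * (Q i ℓ * mixedExt (c i) (Function.update Q i (unitVec ℓ)))
        + (p i) * mixedExt (c i) Q * Q i ℓ := fun ℓ => by ring
  simp only [this]
  rw [Finset.sum_add_distrib, ← Finset.mul_sum, ← Finset.mul_sum, ← mixedExt_self]
  ring

lemma invariance {a b : ℝ} (hab : a ≤ b) {f : ℝ → ∀ i, Fin (m i) → ℝ}
    (hfd : ∀ t ∈ Set.Icc a b,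
      HasDerivWithinAt f (fun i ℓ => repl c p (f t) i ℓ) (Set.Icc a b) t)
    (hfa : InK (f a)) : ∀ t ∈ Set.Icc a b, InK (f t) := by
  have hfc : ContinuousOn f (Set.Icc a b) := fun t ht => (hfd t ht).continuousWithinAt
  intro t ht i
  constructor
  · -- nonnegativity
    intro ℓ
    have hq : ∀ u ∈ Set.Icc a b, HasDerivWithinAt (fun v => f v i ℓ)
        ((f u i ℓ) * (-(p i) * (mixedExt (c i) (Function.update (f u) i (unitVec ℓ))
          - mixedExt (c i) (f u)))) (Set.Icc a b) u := by
      intro u hu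
      have h1 := hasDerivWithinAt_comp_coord (hfd u hu) i ℓ
      convert h1 using 1
      unfold repl
      ring
    have hg : ContinuousOn (fun u => -(p i) *
        (mixedExt (c i) (Function.update (f u) i (unitVec ℓ)) - mixedExt (c i) (f u)))
        (Set.Icc a b) :=
      (continuousOn_const.mul ((continuousOn_comp_mixedExt_update hfc (c i) i
        (unitVec ℓ)).sub (continuousOn_comp_mixedExt hfc (c i))))
    exact ode_nonneg hab hg hq ((hfa i).1 ℓ) t ht
  · -- sum equals one
    have hy : ∀ u ∈ Set.Icc a b, HasDerivWithinAt (fun v => 1 - ∑ ℓ, f v i ℓ)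
        ((1 - ∑ ℓ, f u i ℓ) * (p i * mixedExt (c i) (f u))) (Set.Icc a b) u := by
      intro u hu
      have hS : HasDerivWithinAt (fun v => ∑ ℓ, f v i ℓ) (∑ ℓ, repl c p (f u) i ℓ)
          (Set.Icc a b) u :=
        HasDerivWithinAt.fun_sum fun ℓ _ => hasDerivWithinAt_comp_coord (hfd u hu) i ℓ
      have := hS.const_sub 1
      rwa [sum_repl c p (f u) i, neg_neg] at this
    have hg : ContinuousOn (fun u => p i * mixedExt (c i) (f u)) (Set.Icc a b) :=
      continuousOn_const.mul (continuousOn_comp_mixedExt hfc (c i))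
    have h0 : (fun v => 1 - ∑ ℓ, f v i ℓ) a = 0 := by
      simp [(hfa i).2]
    have := ode_zero hab hg hy h0 t ht
    have h2 : ∑ ℓ, f t i ℓ = 1 := by linarith [this]
    exact h2

end Invariance

section Global

open Set Metric

variable {n : ℕ} {m : Fin n → ℕ} (c : ∀ _i : Fin n, (∀ j, Fin (m j)) → ℝ) (p : Fin n → ℝ)

lemma contDiff_replField :
    ContDiff ℝ 1 (fun Q : ∀ i, Fin (m i) → ℝ => (fun i ℓ => repl c p Q i ℓ)) := by
  rw [contDiff_pi]
  intro i
  rw [contDiff_pi]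
  intro ℓ
  unfold repl
  exact (contDiff_const.mul (contDiff_coord i ℓ)).mul
    (((contDiff_mixedExt (c i)).comp (contDiff_updateConst i (unitVec ℓ))).sub
      (contDiff_mixedExt (c i)))

lemma inK_norm_le {Q : ∀ i, Fin (m i) → ℝ} (hQ : InK Q) : ‖Q‖ ≤ 1 := by
  rw [pi_norm_le_iff_of_nonneg zero_le_one]
  intro i
  rw [pi_norm_le_iff_of_nonneg zero_le_one]
  intro ℓ
  rw [Real.norm_eq_abs, abs_le]
  constructor
  · linarith [(hQ i).1 ℓ]
  · calc Q i ℓ ≤ ∑ k, Q i k :=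
        Finset.single_le_sum (fun k _ => (hQ i).1 k) (Finset.mem_univ ℓ)
      _ = 1 := (hQ i).2

lemma exists_step_constants : ∃ τ : ℝ, 0 < τ ∧
    ∀ (a : ℝ) (x : ∀ i, Fin (m i) → ℝ), InK x →
      ∃ f : ℝ → ∀ i, Fin (m i) → ℝ, f a = x ∧
        (∀ t ∈ Icc a (a + τ),
          HasDerivWithinAt f (fun i ℓ => repl c p (f t) i ℓ) (Icc a (a + τ)) t) ∧
        (∀ t ∈ Icc a (a + τ), InK (f t)) := by
  set Gv : (∀ i, Fin (m i) → ℝ) → (∀ i, Fin (m i) → ℝ) :=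
    fun Q => (fun i ℓ => repl c p Q i ℓ) with hGvdef
  have hGv : ContDiff ℝ 1 Gv := contDiff_replField c p
  set B : Set (∀ i, Fin (m i) → ℝ) := closedBall 0 2 with hBdef
  have hBcomp : IsCompact B := isCompact_closedBall 0 2
  obtain ⟨C, hC⟩ := hBcomp.exists_bound_of_continuousOn hGv.continuous.continuousOn
  have hC0 : 0 ≤ C := le_trans (norm_nonneg _) (hC 0 (mem_closedBall_self (by norm_num)))
  obtain ⟨M, hM⟩ := hBcomp.exists_bound_of_continuousOn
    (hGv.continuous_fderiv one_ne_zero).continuousOn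
  have hlip : LipschitzOnWith M.toNNReal Gv B := by
    refine Convex.lipschitzOnWith_of_nnnorm_fderiv_le (fun x _ => hGv.differentiable one_ne_zero x)
      (fun x hx => ?_) (convex_closedBall 0 2)
    rw [← norm_toNNReal]
    exact Real.toNNReal_mono (hM x hx)
  refine ⟨1 / (C + 1), by positivity, ?_⟩
  intro a x hx
  have hxB : closedBall x 1 ⊆ B := by
    rw [hBdef]
    refine closedBall_subset_closedBall' ?_
    have := inK_norm_le hx
    rw [dist_zero_right]
    linarith
  have hpl : IsPicardLindelof (fun _ y => Gv y) (tmin := a) (tmax := a + 1 / (C + 1))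
      ⟨a, le_refl a, by nlinarith [show (0:ℝ) < 1/(C+1) by positivity]⟩ x (1 : NNReal) 0
      C.toNNReal M.toNNReal :=
    { lipschitzOnWith := fun t _ => hlip.mono (by simpa using hxB)
      continuousOn := fun y _ => continuousOn_const
      norm_le := fun t _ y hy => by
        rw [Real.coe_toNNReal _ hC0]
        exact hC y (hxB (by simpa using hy))
      mul_max_le := by
        simp only [Real.coe_toNNReal _ hC0, NNReal.coe_one, NNReal.coe_zero, sub_zero]
        rw [add_sub_cancel_left, sub_self, max_eq_left (by positivity)]
        rw [div_eq_inv_mul, mul_one, mul_comm]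
        rw [inv_mul_le_iff₀ (by positivity)]
        linarith }
  obtain ⟨f, hf0, hfd⟩ := hpl.exists_eq_forall_mem_Icc_hasDerivWithinAt₀
  have hfd' : ∀ t ∈ Icc a (a + 1 / (C + 1)),
      HasDerivWithinAt f (fun i ℓ => repl c p (f t) i ℓ) (Icc a (a + 1 / (C + 1))) t :=
    fun t ht => hfd t ht
  refine ⟨f, hf0, hfd', ?_⟩
  exact invariance c p (by nlinarith [show (0:ℝ) < 1/(C+1) by positivity]) hfd' (hf0 ▸ hx)

end Global

lemma hasDerivWithinAt_singleton' {E : Type*} [NormedAddCommGroup E] [NormedSpace ℝ E]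
    (f : ℝ → E) (x : ℝ) (d : E) : HasDerivWithinAt f d {x} x := by
  rw [hasDerivWithinAt_iff_isLittleO, nhdsWithin_singleton, Asymptotics.isLittleO_pure]
  simp

section Global2

open Set Metric

variable {n : ℕ} {m : Fin n → ℕ} (c : ∀ _i : Fin n, (∀ j, Fin (m j)) → ℝ) (p : Fin n → ℝ)

lemma exists_global_sol (Q0 : ∀ i, Fin (m i) → ℝ) (h0 : InK Q0) :
    ∃ Q : ℝ → ∀ i, Fin (m i) → ℝ, Q 0 = Q0 ∧ (∀ t, 0 ≤ t → InK (Q t)) ∧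
      (∀ t, 0 ≤ t →
        HasDerivWithinAt Q (fun i ℓ => repl c p (Q t) i ℓ) (Set.Ici 0) t) := by
  classical
  obtain ⟨τ, hτ, hstep⟩ := exists_step_constants c p
  set pstep : (∀ i, Fin (m i) → ℝ) → ℝ → ℝ → ∀ i, Fin (m i) → ℝ := fun x a =>
    if h : InK x then Classical.choose (hstep a x h) else fun _ => x with hpstepdef
  have pstep_spec : ∀ (a : ℝ) (x) (h : InK x), (pstep x a) a = x ∧
      (∀ t ∈ Icc a (a+τ), HasDerivWithinAt (pstep x a)
        (fun i ℓ => repl c p ((pstep x a) t) i ℓ) (Icc a (a+τ)) t) ∧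
      (∀ t ∈ Icc a (a+τ), InK ((pstep x a) t)) := by
    intro a x h
    simp only [hpstepdef, dif_pos h]
    exact Classical.choose_spec (hstep a x h)
  set F : ℕ → ℝ → ∀ i, Fin (m i) → ℝ := fun k => Nat.rec (fun _ => Q0)
    (fun k Fk => fun t => if t ≤ (k:ℝ)*τ then Fk t
      else pstep (Fk ((k:ℝ)*τ)) ((k:ℝ)*τ) t) k with hFdef
  have Fsucc : ∀ (k : ℕ) (t : ℝ), F (k+1) t = if t ≤ (k:ℝ)*τ then F k t
      else pstep (F k ((k:ℝ)*τ)) ((k:ℝ)*τ) t := fun _ _ => rfl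
  have Fmono : ∀ (k j : ℕ), k ≤ j → ∀ t, t ≤ (k:ℝ)*τ → F j t = F k t := by
    intro k j
    induction j with
    | zero => intro h t _; rw [Nat.le_zero.mp h]
    | succ j ih =>
      intro h t ht
      by_cases hk : k = j + 1
      · rw [hk]
      · have hkj : k ≤ j := Nat.lt_succ_iff.mp (lt_of_le_of_ne h hk)
        have hle : (k:ℝ)*τ ≤ (j:ℝ)*τ :=
          mul_le_mul_of_nonneg_right (by exact_mod_cast hkj) hτ.le
        rw [Fsucc, if_pos (ht.trans hle)]
        exact ih hkj t ht
  have Fprop : ∀ k : ℕ, F k 0 = Q0 ∧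
      (∀ t ∈ Icc (0:ℝ) ((k:ℝ)*τ), HasDerivWithinAt (F k)
        (fun i ℓ => repl c p (F k t) i ℓ) (Icc (0:ℝ) ((k:ℝ)*τ)) t) ∧
      (∀ t ∈ Icc (0:ℝ) ((k:ℝ)*τ), InK (F k t)) := by
    intro k
    induction k with
    | zero =>
      refine ⟨rfl, ?_, ?_⟩
      · intro t ht
        simp only [Nat.cast_zero, zero_mul, Set.Icc_self, mem_singleton_iff] at ht ⊢
        subst ht
        exact hasDerivWithinAt_singleton' _ _ _
      · intro t ht
        simp only [Nat.cast_zero, zero_mul, Set.Icc_self, mem_singleton_iff] at ht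
        subst ht
        exact h0
    | succ k ih =>
      obtain ⟨h1, h2, h3⟩ := ih
      have ha0 : (0:ℝ) ≤ (k:ℝ)*τ := by positivity
      have hab : (((k+1:ℕ)):ℝ)*τ = (k:ℝ)*τ + τ := by push_cast; ring
      have haa : (k:ℝ)*τ ≤ (k:ℝ)*τ + τ := by linarith
      have hxK : InK (F k ((k:ℝ)*τ)) := h3 _ ⟨ha0, le_refl _⟩
      obtain ⟨hp0, hpd, hpK⟩ := pstep_spec ((k:ℝ)*τ) (F k ((k:ℝ)*τ)) hxK
      have EqL : ∀ u ∈ Icc (0:ℝ) ((k:ℝ)*τ), F (k+1) u = F k u := fun u hu => by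
        rw [Fsucc, if_pos hu.2]
      have EqR : ∀ u ∈ Icc ((k:ℝ)*τ) ((k:ℝ)*τ + τ),
          F (k+1) u = pstep (F k ((k:ℝ)*τ)) ((k:ℝ)*τ) u := by
        intro u hu
        rw [Fsucc]
        by_cases h : u ≤ (k:ℝ)*τ
        · have hu' : u = (k:ℝ)*τ := le_antisymm h hu.1
          rw [if_pos h, hu', hp0]
        · rw [if_neg h]
      refine ⟨?_, ?_, ?_⟩
      · rw [Fsucc, if_pos ha0, h1]
      · intro t ht
        rw [hab] at ht ⊢
        have hval : F (k+1) t = F k t ∨ F (k+1) t = pstep (F k ((k:ℝ)*τ)) ((k:ℝ)*τ) t := by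
          by_cases h : t ≤ (k:ℝ)*τ
          · exact Or.inl (EqL t ⟨ht.1, h⟩)
          · exact Or.inr (EqR t ⟨le_of_not_ge h, ht.2⟩)
        rcases lt_trichotomy t ((k:ℝ)*τ) with h | h | h
        · have hmem : t ∈ Icc (0:ℝ) ((k:ℝ)*τ) := ⟨ht.1, h.le⟩
          have d1 := (h2 t hmem).congr EqL (EqL t hmem)
          rw [← EqL t hmem] at d1
          refine d1.mono_of_mem_nhdsWithin ?_
          rw [mem_nhdsWithin]
          exact ⟨Iio ((k:ℝ)*τ), isOpen_Iio, h,
            fun u hu => ⟨hu.2.1, hu.1.le.trans (le_refl _)⟩⟩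
        · rw [h]
          have hmemL : (k:ℝ)*τ ∈ Icc (0:ℝ) ((k:ℝ)*τ) := ⟨ha0, le_refl _⟩
          have hmemR : ((k:ℝ)*τ) ∈ Icc ((k:ℝ)*τ) ((k:ℝ)*τ + τ) := ⟨le_refl _, haa⟩
          have hFv : F (k+1) ((k:ℝ)*τ) = F k ((k:ℝ)*τ) := EqL _ hmemL
          have d1 := (h2 _ hmemL).congr EqL hFv
          have d2 := (hpd _ hmemR).congr EqR (EqR _ hmemR)
          rw [hp0] at d2
          rw [← hFv] at d1 d2
          have := d1.union d2
          rwa [Icc_union_Icc_eq_Icc ha0 haa] at this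
        · have hmem : t ∈ Icc ((k:ℝ)*τ) ((k:ℝ)*τ + τ) := ⟨h.le, ht.2⟩
          have d1 := (hpd t hmem).congr EqR (EqR t hmem)
          rw [← EqR t hmem] at d1
          refine d1.mono_of_mem_nhdsWithin ?_
          rw [mem_nhdsWithin]
          refine ⟨Ioi ((k:ℝ)*τ), isOpen_Ioi, h, fun u hu => ⟨hu.1.le, hu.2.2⟩⟩
      · intro t ht
        rw [hab] at ht
        by_cases h : t ≤ (k:ℝ)*τ
        · rw [EqL t ⟨ht.1, h⟩]
          exact h3 t ⟨ht.1, h⟩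
        · rw [EqR t ⟨le_of_not_ge h, ht.2⟩]
          exact hpK t ⟨le_of_not_ge h, ht.2⟩
  set N : ℝ → ℕ := fun t => ⌊t/τ⌋₊ + 1 with hNdef
  have htlt : ∀ t, 0 ≤ t → t < (N t : ℝ)*τ := by
    intro t ht
    have h1 : t/τ < (⌊t/τ⌋₊ : ℝ) + 1 := Nat.lt_floor_add_one _
    rw [div_lt_iff₀ hτ] at h1
    calc t < ((⌊t/τ⌋₊ : ℝ) + 1) * τ := h1
      _ = (N t : ℝ) * τ := by rw [hNdef]; push_cast; ring
  set Qsol : ℝ → ∀ i, Fin (m i) → ℝ := fun t => F (N t) t with hQdef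
  have hcons : ∀ (k : ℕ) (t : ℝ), 0 ≤ t → t ≤ (k:ℝ)*τ → Qsol t = F k t := by
    intro k t ht0 htk
    rcases le_total (N t) k with h | h
    · exact (Fmono (N t) k h t (htlt t ht0).le).symm
    · exact Fmono k (N t) h t htk
  refine ⟨Qsol, ?_, ?_, ?_⟩
  · rw [hQdef]
    exact (Fprop (N 0)).1
  · intro t ht
    exact (Fprop (N t)).2.2 t ⟨ht, (htlt t ht).le⟩
  · intro t ht
    have hmem : t ∈ Icc (0:ℝ) ((N t : ℝ)*τ) := ⟨ht, (htlt t ht).le⟩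
    have d1 := (Fprop (N t)).2.1 t hmem
    have EqQ : ∀ u ∈ Icc (0:ℝ) ((N t : ℝ)*τ), Qsol u = F (N t) u := fun u hu =>
      hcons (N t) u hu.1 hu.2
    have d2 := d1.congr EqQ (EqQ t hmem)
    rw [← EqQ t hmem] at d2
    refine d2.mono_of_mem_nhdsWithin ?_
    rw [mem_nhdsWithin]
    exact ⟨Iio ((N t : ℝ)*τ), isOpen_Iio, htlt t ht, fun u hu => ⟨hu.2, hu.1.le⟩⟩

end Global2

section Main

open Set Metric

theorem stable_stationary_is_nash' {n : ℕ} {m : Fin n → ℕ}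
    (c : ∀ _i : Fin n, (∀ j, Fin (m j)) → ℝ)
    (p : Fin n → ℝ) (hp : ∀ i, 0 < p i)
    (Qs : ∀ i, Fin (m i) → ℝ) (hK : InK Qs)
    (hstat : ∀ (i : Fin n) (ℓ : Fin (m i)), repl c p Qs i ℓ = 0)
    (hstable : ∀ U ∈ nhds Qs, ∃ V ∈ nhds Qs,
      ∀ Q : ℝ → ∀ i, Fin (m i) → ℝ,
        (∀ t, 0 ≤ t → InK (Q t)) →
        (∀ t, 0 ≤ t → ∀ (i : Fin n) (ℓ : Fin (m i)),
          HasDerivWithinAt (fun u => Q u i ℓ) (repl c p (Q t) i ℓ) (Set.Ici 0) t) →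
        Q 0 ∈ V → ∀ t, 0 ≤ t → Q t ∈ U) :
    (∀ i, ∀ q' : Fin (m i) → ℝ, IsSimplex q' →
      mixedExt (c i) Qs ≤ mixedExt (c i) (Function.update Qs i q')) := by
  intro i q' hq'
  by_contra hlt
  push_neg at hlt
  -- find a strictly better pure strategy
  obtain ⟨ℓ, hℓ⟩ : ∃ ℓ, mixedExt (c i) (Function.update Qs i (unitVec ℓ))
      < mixedExt (c i) Qs := by
    by_contra hn
    push_neg at hn
    have h1 : mixedExt (c i) Qs = ∑ ℓ, q' ℓ * mixedExt (c i) Qs := by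
      rw [← Finset.sum_mul, hq'.2, one_mul]
    have h2 : ∑ ℓ, q' ℓ * mixedExt (c i) Qs
        ≤ ∑ ℓ, q' ℓ * mixedExt (c i) (Function.update Qs i (unitVec ℓ)) :=
      Finset.sum_le_sum fun ℓ _ => mul_le_mul_of_nonneg_left (hn ℓ) (hq'.1 ℓ)
    rw [← mixedExt_update] at h2
    linarith [h1 ▸ h2]
  set δ : ℝ := mixedExt (c i) Qs - mixedExt (c i) (Function.update Qs i (unitVec ℓ))
    with hδdef
  have hδ : 0 < δ := by rw [hδdef]; linarith
  set d : (∀ i', Fin (m i') → ℝ) → ℝ := fun Q =>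
    mixedExt (c i) (Function.update Q i (unitVec ℓ)) - mixedExt (c i) Q with hddef
  have hdcont : Continuous d :=
    (((contDiff_mixedExt (c i)).comp (contDiff_updateConst i (unitVec ℓ))).sub
      (contDiff_mixedExt (c i))).continuous
  have hdQs : d Qs = -δ := by rw [hddef, hδdef]; ring
  have hU : d ⁻¹' (Iio (-(δ/2))) ∈ nhds Qs := by
    refine (isOpen_Iio.preimage hdcont).mem_nhds ?_
    simp only [Set.mem_preimage, hdQs, Set.mem_Iio]
    linarith
  obtain ⟨V, hV, hstab⟩ := hstable _ hU
  obtain ⟨r, hr, hball⟩ := Metric.mem_nhds_iff.mp hV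
  set ε : ℝ := min (r/2) 1 with hεdef
  have hε : 0 < ε := lt_min (by linarith) one_pos
  have hε1 : ε ≤ 1 := min_le_right _ _
  have hεr : ε < r := lt_of_le_of_lt (min_le_left _ _) (by linarith)
  set Q0 : ∀ i', Fin (m i') → ℝ :=
    Function.update Qs i (fun k => (1-ε) * Qs i k + ε * unitVec ℓ k) with hQ0def
  have hQsle : ∀ (i' : Fin n) (k : Fin (m i')), Qs i' k ≤ 1 := fun i' k => by
    calc Qs i' k ≤ ∑ k', Qs i' k' :=
        Finset.single_le_sum (fun k' _ => (hK i').1 k') (Finset.mem_univ k)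
      _ = 1 := (hK i').2
  have hQ0K : InK Q0 := by
    intro j
    rcases eq_or_ne j i with h | h
    · subst h
      rw [hQ0def, Function.update_self]
      constructor
      · intro k
        have h1 := (hK j).1 k
        have h2 : (0:ℝ) ≤ unitVec ℓ k := by unfold unitVec; positivity
        show (0:ℝ) ≤ (1-ε) * Qs j k + ε * unitVec ℓ k
        have h3 : (0:ℝ) ≤ (1-ε) * Qs j k := mul_nonneg (by linarith) h1
        have h4 : (0:ℝ) ≤ ε * unitVec ℓ k := mul_nonneg hε.le h2
        linarith
      · rw [Finset.sum_add_distrib, ← Finset.mul_sum, ← Finset.mul_sum, (hK j).2]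
        have : ∑ k, unitVec ℓ k = 1 := by
          unfold unitVec
          simp
        rw [this]
        ring
    · rw [hQ0def, Function.update_of_ne h]
      exact hK j
  have hQ0V : Q0 ∈ V := by
    apply hball
    rw [mem_ball]
    have hdist : dist Q0 Qs ≤ ε := by
      rw [dist_pi_le_iff hε.le]
      intro j
      rcases eq_or_ne j i with h | h
      · subst h
        rw [hQ0def, Function.update_self]
        rw [dist_pi_le_iff hε.le]
        intro k
        rw [Real.dist_eq]
        have h1 := (hK j).1 k
        have h2 := hQsle j k
        have h3 : (1-ε) * Qs j k + ε * unitVec ℓ k - Qs j k = ε * (unitVec ℓ k - Qs j k) := by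
          ring
        rw [h3, abs_mul, abs_of_pos hε]
        have h5 : |unitVec ℓ k - Qs j k| ≤ 1 := by
          rw [abs_le]
          unfold unitVec
          rcases eq_or_ne k ℓ with hk | hk
          · subst hk
            have h1' := (hK j).1 k
            have h2' := hQsle j k
            rw [if_pos rfl]
            constructor <;> linarith
          · have h1' := (hK j).1 k
            have h2' := hQsle j k
            simp only [if_neg hk]
            constructor <;> linarith
        calc ε * |unitVec ℓ k - Qs j k| ≤ ε * 1 := mul_le_mul_of_nonneg_left h5 hε.le
          _ = ε := mul_one ε
      · rw [hQ0def, Function.update_of_ne h, dist_self]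
        exact hε.le
    linarith
  obtain ⟨Qsol, hQsol0, hQsolK, hQsold⟩ := exists_global_sol c p Q0 hQ0K
  have hcomp : ∀ t, 0 ≤ t → ∀ (i' : Fin n) (ℓ' : Fin (m i')),
      HasDerivWithinAt (fun u => Qsol u i' ℓ') (repl c p (Qsol t) i' ℓ') (Set.Ici 0) t :=
    fun t ht i' ℓ' => hasDerivWithinAt_comp_coord (hQsold t ht) i' ℓ'
  have hinU : ∀ t, 0 ≤ t → Qsol t ∈ d ⁻¹' (Iio (-(δ/2))) :=
    hstab Qsol hQsolK hcomp (hQsol0.symm ▸ hQ0V)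
  -- derive the contradiction via exponential growth
  set lam : ℝ := p i * (δ/2) with hlamdef
  have hlam : 0 < lam := mul_pos (hp i) (by linarith)
  set T : ℝ := (Real.log (1/ε) + 1) / lam with hTdef
  have hlog : 0 ≤ Real.log (1/ε) := Real.log_nonneg (by
    rw [le_div_iff₀ hε]; linarith)
  have hT : 0 ≤ T := by positivity
  have hsub : Icc (0:ℝ) T ⊆ Ici (0:ℝ) := Icc_subset_Ici_self
  have hQsolc : ContinuousOn Qsol (Icc 0 T) :=
    fun t ht => ((hQsold t ht.1).continuousWithinAt).mono hsub
  have hq : ∀ t ∈ Icc (0:ℝ) T, HasDerivWithinAt (fun u => Qsol u i ℓ)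
      ((Qsol t i ℓ) * (-(p i) * d (Qsol t))) (Icc 0 T) t := by
    intro t ht
    have h1 := (hcomp t ht.1 i ℓ).mono hsub
    refine h1.congr_deriv ?_
    rw [hddef]
    unfold repl
    ring
  have hg : ContinuousOn (fun t => -(p i) * d (Qsol t)) (Icc (0:ℝ) T) :=
    continuousOn_const.mul (hdcont.comp_continuousOn hQsolc)
  have hlb : ∀ t ∈ Icc (0:ℝ) T, lam ≤ -(p i) * d (Qsol t) := by
    intro t ht
    have := hinU t ht.1
    rw [Set.mem_preimage, Set.mem_Iio] at this
    have hpi := hp i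
    rw [hlamdef]
    nlinarith
  have hq00 : ε ≤ Qsol 0 i ℓ := by
    rw [hQsol0, hQ0def, Function.update_self]
    have h1 := (hK i).1 ℓ
    have h2 : unitVec ℓ ℓ = 1 := by unfold unitVec; simp
    rw [h2]
    nlinarith
  have hlow := ode_lower_bound hT hg hq (le_trans hε.le hq00) hlb T ⟨hT, le_refl _⟩
  have hup : Qsol T i ℓ ≤ 1 := by
    have := hQsolK T hT
    calc Qsol T i ℓ ≤ ∑ k, Qsol T i k :=
        Finset.single_le_sum (fun k _ => (this i).1 k) (Finset.mem_univ ℓ)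
      _ = 1 := (this i).2
  have hexp : Real.exp (lam * (T - 0)) = (1/ε) * Real.exp 1 := by
    rw [sub_zero, hTdef, mul_div_cancel₀ _ (ne_of_gt hlam), Real.exp_add,
      Real.exp_log (by positivity)]
  have he1 : (2:ℝ) ≤ Real.exp 1 := by
    have := Real.add_one_le_exp 1
    linarith
  have hcontra : (2:ℝ) ≤ Qsol T i ℓ := by
    calc (2:ℝ) = ε * ((1/ε) * 2) := by field_simp
      _ ≤ ε * ((1/ε) * Real.exp 1) := by
          have : (1/ε) * 2 ≤ (1/ε) * Real.exp 1 := by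
            apply mul_le_mul_of_nonneg_left he1 (by positivity)
          nlinarith
      _ = ε * Real.exp (lam * (T - 0)) := by rw [hexp]
      _ ≤ Qsol 0 i ℓ * Real.exp (lam * (T - 0)) :=
          mul_le_mul_of_nonneg_right hq00 (Real.exp_nonneg _)
      _ ≤ Qsol T i ℓ := hlow
  linarith

end Main

/-- every Lyapunov-stable stationary point of the multipopulation
replicator dynamics is a Nash equilibrium. -/
theorem stable_stationary_is_nash {n : ℕ} {m : Fin n → ℕ}
    (c : ∀ _i : Fin n, (∀ j, Fin (m j)) → ℝ)
    (p : Fin n → ℝ) (hp : ∀ i, 0 < p i)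
    (Qs : ∀ i, Fin (m i) → ℝ) (hK : InK Qs)
    (hstat : ∀ (i : Fin n) (ℓ : Fin (m i)), repl c p Qs i ℓ = 0)
    (hstable : ∀ U ∈ nhds Qs, ∃ V ∈ nhds Qs,
      ∀ Q : ℝ → ∀ i, Fin (m i) → ℝ,
        (∀ t, 0 ≤ t → InK (Q t)) →
        (∀ t, 0 ≤ t → ∀ (i : Fin n) (ℓ : Fin (m i)),
          HasDerivWithinAt (fun u => Q u i ℓ) (repl c p (Q t) i ℓ) (Set.Ici 0) t) →
        Q 0 ∈ V → ∀ t, 0 ≤ t → Q t ∈ U) :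
    IsNash c Qs := by
  exact stable_stationary_is_nash' c p hp Qs hK hstat hstable
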